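/- Let G be a finite simple graph with m(G) = 2^β(G), let S be a vertex cover of G with |S| = β(G), and let U ⊆ S. Then the graph G_U obtained by deleting the closed neighborhood of U satisfies m(G_U) = 2^{β(G_U)} and β(G_U) = β(G) − |U|. -/

import Mathlib

variable {V : Type*}

/-- `S` is an independent set of `G`: no two vertices of `S` are adjacent. -/
def IsIndepSet (G : SimpleGraph V) (S : Set V) : Prop :=
  ∀ ⦃u v : V⦄, u ∈ S → v ∈ S → ¬ G.Adj u v

/-- `S` is a maximal independent set of `G`. -/
def IsMaxIndepSet (G : SimpleGraph V) (S : Set V) : Prop :=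
  IsIndepSet G S ∧ ∀ T : Set V, IsIndepSet G T → S ⊆ T → S = T

/-- `m(G)`: the number of maximal independent sets of `G`. -/
noncomputable def numMaxIndep (G : SimpleGraph V) : ℕ :=
  {S : Set V | IsMaxIndepSet G S}.ncard

/-- `C` is a vertex cover of `G`: every edge has at least one endpoint in `C`. -/
def IsVertexCover (G : SimpleGraph V) (C : Set V) : Prop :=
  ∀ ⦃u v : V⦄, G.Adj u v → u ∈ C ∨ v ∈ C

/-- `β(G)`: the minimum size of a vertex cover of `G`. -/
noncomputable def coverNumber (G : SimpleGraph V) : ℕ :=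
  sInf {n : ℕ | ∃ C : Set V, IsVertexCover G C ∧ C.ncard = n}

/-- `M` is a matching of `G`: a set of edges of `G`, pairwise sharing no vertex. -/
def IsMatching (G : SimpleGraph V) (M : Set (Sym2 V)) : Prop :=
  M ⊆ G.edgeSet ∧ ∀ e ∈ M, ∀ f ∈ M, e ≠ f → ∀ v : V, v ∈ e → v ∉ f

/-- `M` is an induced matching of `G`: a matching such that no two distinct
edges of `M` are joined by an edge of `G`. -/
def IsInducedMatching (G : SimpleGraph V) (M : Set (Sym2 V)) : Prop :=
  IsMatching G M ∧ ∀ e ∈ M, ∀ f ∈ M, e ≠ f → ∀ u v : V, u ∈ e → v ∈ f → ¬ G.Adj u v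

/-- `ν(G)`: the maximum size of a matching of `G`. -/
noncomputable def matchingNumber (G : SimpleGraph V) : ℕ :=
  sSup {n : ℕ | ∃ M : Set (Sym2 V), IsMatching G M ∧ M.ncard = n}

/-- `ν₀(G)`: the maximum size of an induced matching of `G`. -/
noncomputable def inducedMatchingNumber (G : SimpleGraph V) : ℕ :=
  sSup {n : ℕ | ∃ M : Set (Sym2 V), IsInducedMatching G M ∧ M.ncard = n}

/-- `G` is bipartite: the vertices split into two sides with every edge crossing. -/
def IsBipartite (G : SimpleGraph V) : Prop :=
  ∃ A : Set V, ∀ ⦃u v : V⦄, G.Adj u v → (u ∈ A ↔ v ∉ A)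

lemma aux_ncard_powerset [Finite V] (S : Set V) :
    {A : Set V | A ⊆ S}.ncard = 2 ^ S.ncard := by
  classical
  have h : {A : Set V | A ⊆ S} = 𝒫 S := rfl
  haveI : Fintype ↥S := Fintype.ofFinite _
  rw [h, ← Nat.card_coe_set_eq, Nat.card_congr (Equiv.Set.powerset S),
    Nat.card_eq_fintype_card, Fintype.card_set, ← Nat.card_coe_set_eq,
    Nat.card_eq_fintype_card]

lemma numMaxIndep_eq_two_pow [Finite V] (G : SimpleGraph V) (S : Set V)
    (hc : IsVertexCover G S) (hi : IsIndepSet G S)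
    (hp : ∀ s ∈ S, ∃ w, G.Adj s w ∧ ∀ t ∈ S, G.Adj t w → t = s) :
    numMaxIndep G = 2 ^ S.ncard := by
  classical
  set Φ : Set V → Set V := fun A => A ∪ {v | v ∉ S ∧ ∀ a ∈ A, ¬ G.Adj a v} with hΦ
  have hind : ∀ A, A ⊆ S → IsIndepSet G (Φ A) := by
    intro A hA u v hu hv hadj
    rcases hu with hu | ⟨huS, hu2⟩
    · rcases hv with hv | ⟨hvS, hv2⟩
      · exact hi (hA hu) (hA hv) hadj
      · exact hv2 u hu hadj
    · rcases hv with hv | ⟨hvS, hv2⟩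
      · exact hu2 v hv hadj.symm
      · rcases hc hadj with h | h
        · exact huS h
        · exact hvS h
  have hmax : ∀ A, A ⊆ S → IsMaxIndepSet G (Φ A) := by
    intro A hA
    refine ⟨hind A hA, fun T hT hsub => Set.Subset.antisymm hsub fun v hv => ?_⟩
    by_cases hvS : v ∈ S
    · left
      by_contra hvA
      obtain ⟨w, hw1, hw2⟩ := hp v hvS
      have hwS : w ∉ S := fun hwS => hi hvS hwS hw1
      have hwΦ : w ∈ Φ A := Or.inr ⟨hwS, fun a ha hadj => hvA ((hw2 a (hA ha) hadj) ▸ ha)⟩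
      exact hT hv (hsub hwΦ) hw1
    · exact Or.inr ⟨hvS, fun a ha hadj => hT (hsub (Or.inl ha)) hv hadj⟩
  have himg : {M : Set V | IsMaxIndepSet G M} = Φ '' {A : Set V | A ⊆ S} := by
    ext M
    constructor
    · intro hM
      refine ⟨M ∩ S, Set.inter_subset_right, ?_⟩
      have h1 : M ⊆ Φ (M ∩ S) := by
        intro v hv
        by_cases hvS : v ∈ S
        · exact Or.inl ⟨hv, hvS⟩
        · exact Or.inr ⟨hvS, fun a ha hadj => hM.1 ha.1 hv hadj⟩
      exact (hM.2 _ (hind _ Set.inter_subset_right) h1).symm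
    · rintro ⟨A, hA, rfl⟩
      exact hmax A hA
  have hsec : ∀ C, C ⊆ S → Φ C ∩ S = C := by
    intro C hC
    ext x
    constructor
    · rintro ⟨hx | ⟨hx1, _⟩, hxS⟩
      · exact hx
      · exact absurd hxS hx1
    · exact fun hx => ⟨Or.inl hx, hC hx⟩
  have hinj : Set.InjOn Φ {A : Set V | A ⊆ S} := by
    intro A hA B hB hAB
    rw [← hsec A hA, ← hsec B hB, hAB]
  rw [numMaxIndep, himg, Set.ncard_image_of_injOn hinj, aux_ncard_powerset]

lemma coverNumber_eq_of [Finite V] (G : SimpleGraph V) (S : Set V)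
    (hc : IsVertexCover G S) (hmin : ∀ C : Set V, IsVertexCover G C → S.ncard ≤ C.ncard) :
    coverNumber G = S.ncard := by
  refine le_antisymm (Nat.sInf_le ⟨S, hc, rfl⟩) (le_csInf ⟨S.ncard, S, hc, rfl⟩ ?_)
  rintro n ⟨C, hC, rfl⟩
  exact hmin C hC

lemma extremal_structure [Finite V] (G : SimpleGraph V) (S : Set V)
    (hc : IsVertexCover G S) (hcard : S.ncard = coverNumber G)
    (hm : numMaxIndep G = 2 ^ coverNumber G) :
    IsIndepSet G S ∧ ∀ s ∈ S, ∃ w, G.Adj s w ∧ ∀ t ∈ S, G.Adj t w → t = s := by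
  classical
  have hdet : ∀ M : Set V, IsMaxIndepSet G M →
      M = (M ∩ S) ∪ {v | v ∉ S ∧ ∀ a ∈ M ∩ S, ¬ G.Adj a v} := by
    intro M hM
    apply Set.Subset.antisymm
    · intro v hv
      by_cases hvS : v ∈ S
      · exact Or.inl ⟨hv, hvS⟩
      · exact Or.inr ⟨hvS, fun a ha hadj => hM.1 ha.1 hv hadj⟩
    · rintro v (hv | ⟨hvS, hv2⟩)
      · exact hv.1
      · have hvind : IsIndepSet G (M ∪ {v}) := by
          intro x y hx hy hadj
          rcases hx with hx | hx
          · rcases hy with hy | hy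
            · exact hM.1 hx hy hadj
            · rw [Set.mem_singleton_iff.1 hy] at hadj
              by_cases hxS : x ∈ S
              · exact hv2 x ⟨hx, hxS⟩ hadj
              · rcases hc hadj with h | h
                · exact hxS h
                · exact hvS h
          · rcases hy with hy | hy
            · rw [Set.mem_singleton_iff.1 hx] at hadj
              by_cases hyS : y ∈ S
              · exact hv2 y ⟨hy, hyS⟩ hadj.symm
              · rcases hc hadj with h | h
                · exact hvS h
                · exact hyS h
            · rw [Set.mem_singleton_iff.1 hx, Set.mem_singleton_iff.1 hy] at hadj
              exact G.loopless.irrefl _ hadj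
        have h := hM.2 _ hvind Set.subset_union_left
        rw [h]
        exact Or.inr rfl
  have hinj : Set.InjOn (fun M => M ∩ S) {M : Set V | IsMaxIndepSet G M} := by
    intro A hA B hB hAB
    rw [hdet A hA, hdet B hB]
    simp only at hAB
    rw [hAB]
  have hsub : (fun M => M ∩ S) '' {M : Set V | IsMaxIndepSet G M} ⊆ {A : Set V | A ⊆ S} := by
    rintro _ ⟨M, _, rfl⟩; exact Set.inter_subset_right
  have h1 : ((fun M => M ∩ S) '' {M : Set V | IsMaxIndepSet G M}).ncard = 2 ^ S.ncard := by
    rw [Set.ncard_image_of_injOn hinj]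
    calc {M : Set V | IsMaxIndepSet G M}.ncard = numMaxIndep G := rfl
      _ = 2 ^ coverNumber G := hm
      _ = 2 ^ S.ncard := by rw [hcard]
  have heq : (fun M => M ∩ S) '' {M : Set V | IsMaxIndepSet G M} = {A : Set V | A ⊆ S} :=
    Set.eq_of_subset_of_ncard_le hsub
      (by rw [h1, aux_ncard_powerset]) (Set.Finite.powerset S.toFinite)
  have hsurj : ∀ A, A ⊆ S → ∃ M, IsMaxIndepSet G M ∧ M ∩ S = A := by
    intro A hA
    have : A ∈ (fun M => M ∩ S) '' {M : Set V | IsMaxIndepSet G M} := by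
      rw [heq]; exact hA
    obtain ⟨M, hM, hMA⟩ := this
    exact ⟨M, hM, hMA⟩
  obtain ⟨M₀, hM₀, hM₀S⟩ := hsurj S Set.Subset.rfl
  have hSM₀ : S ⊆ M₀ := by
    intro s hs
    have : s ∈ M₀ ∩ S := by rw [hM₀S]; exact hs
    exact this.1
  have hiS : IsIndepSet G S := fun u v hu hv => hM₀.1 (hSM₀ hu) (hSM₀ hv)
  refine ⟨hiS, fun s hs => ?_⟩
  obtain ⟨M, hM, hMS⟩ := hsurj (S \ {s}) Set.diff_subset
  have hsM : s ∉ M := by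
    intro h
    have : s ∈ M ∩ S := ⟨h, hs⟩
    rw [hMS] at this
    exact this.2 rfl
  have hnotind : ¬ IsIndepSet G (M ∪ {s}) := by
    intro hind
    exact hsM (by rw [hM.2 _ hind Set.subset_union_left]; exact Or.inr rfl)
  unfold IsIndepSet at hnotind
  push_neg at hnotind
  obtain ⟨u, v, hu, hv, hadj⟩ := hnotind
  have hw : ∃ w ∈ M, G.Adj s w := by
    rcases hu with hu | hu
    · rcases hv with hv | hv
      · exact absurd hadj (hM.1 hu hv)
      · rw [Set.mem_singleton_iff.1 hv] at hadj
        exact ⟨u, hu, hadj.symm⟩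
    · rcases hv with hv | hv
      · rw [Set.mem_singleton_iff.1 hu] at hadj
        exact ⟨v, hv, hadj⟩
      · rw [Set.mem_singleton_iff.1 hu, Set.mem_singleton_iff.1 hv] at hadj
        exact absurd hadj (G.loopless.irrefl s)
  obtain ⟨w, hwM, hsw⟩ := hw
  refine ⟨w, hsw, fun t ht hadj' => ?_⟩
  by_contra hts
  have htM : t ∈ M := by
    have : t ∈ M ∩ S := by rw [hMS]; exact ⟨ht, hts⟩
    exact this.1
  exact hM.1 htM hwM hadj'

/-- If `m(G) = 2 ^ β(G)`, `S` is a minimum vertex cover and `U ⊆ S`,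
then the localization `G_U` satisfies `m(G_U) = 2 ^ β(G_U)` and
`β(G_U) = β(G) − |U|`. -/
theorem localization_extremal [Fintype V] (G : SimpleGraph V)
    (hm : numMaxIndep G = 2 ^ coverNumber G)
    (S : Set V) (hS : IsVertexCover G S) (hcard : S.ncard = coverNumber G)
    (U : Set V) (hU : U ⊆ S) :
    numMaxIndep (G.induce ((U ∪ {v : V | ∃ u ∈ U, G.Adj u v})ᶜ)) =
        2 ^ coverNumber (G.induce ((U ∪ {v : V | ∃ u ∈ U, G.Adj u v})ᶜ)) ∧
      coverNumber (G.induce ((U ∪ {v : V | ∃ u ∈ U, G.Adj u v})ᶜ)) =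
        coverNumber G - U.ncard := by
  classical
  set W : Set V := (U ∪ {v : V | ∃ u ∈ U, G.Adj u v})ᶜ with hW
  set G' : SimpleGraph ↥W := G.induce W with hG'
  obtain ⟨hiS, hpriv⟩ := extremal_structure G S hS hcard hm
  choose! f hf1 hf2 using hpriv
  have hfnS : ∀ s ∈ S, f s ∉ S := fun s hs h => hiS hs h (hf1 s hs)
  have hWU : ∀ s : V, s ∈ W → s ∉ U := fun s hsW hsU => hsW (Or.inl hsU)
  have hSW : ∀ s ∈ S, s ∉ U → s ∈ W := by
    intro s hs hsU
    simp only [hW, Set.mem_compl_iff, Set.mem_union, Set.mem_setOf_eq]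
    push_neg
    exact ⟨hsU, fun u hu hadj => hiS (hU hu) hs hadj⟩
  have hfW : ∀ s ∈ S, s ∉ U → f s ∈ W := by
    intro s hs hsU
    simp only [hW, Set.mem_compl_iff, Set.mem_union, Set.mem_setOf_eq]
    push_neg
    refine ⟨fun h => hfnS s hs (hU h), fun u hu hadj => ?_⟩
    exact hsU ((hf2 s hs u (hU hu) hadj) ▸ hu)
  set S' : Set ↥W := Subtype.val ⁻¹' S with hS'
  have hS'cover : IsVertexCover G' S' := by
    intro x y hxy
    have hxy' : G.Adj ↑x ↑y := hxy
    rcases hS hxy' with h | h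
    · exact Or.inl h
    · exact Or.inr h
  have hS'indep : IsIndepSet G' S' := fun x y hx hy hadj => hiS hx hy hadj
  have hS'priv : ∀ x ∈ S', ∃ w, G'.Adj x w ∧ ∀ t ∈ S', G'.Adj t w → t = x := by
    intro x hx
    have hxU : ↑x ∉ U := hWU _ x.2
    refine ⟨⟨f ↑x, hfW _ hx hxU⟩, ?_, fun t ht hadj => ?_⟩
    · show G.Adj _ _
      exact hf1 _ hx
    · exact Subtype.ext (hf2 _ hx _ ht hadj)
  have hvalS' : Subtype.val '' S' = S \ U := by
    ext v
    constructor
    · rintro ⟨x, hx, rfl⟩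
      exact ⟨hx, hWU _ x.2⟩
    · rintro ⟨hv, hvU⟩
      exact ⟨⟨v, hSW v hv hvU⟩, hv, rfl⟩
  have hS'card : S'.ncard = S.ncard - U.ncard := by
    rw [← Set.ncard_image_of_injective S' Subtype.val_injective, hvalS',
      Set.ncard_diff hU]
  have hmin : ∀ C : Set ↥W, IsVertexCover G' C → S'.ncard ≤ C.ncard := by
    intro C hC
    set g : V → V := fun s => if s ∈ Subtype.val '' C then s else f s with hg
    have hgmem : ∀ s ∈ S \ U, g s ∈ Subtype.val '' C := by
      intro s hs
      have hsW : s ∈ W := hSW s hs.1 hs.2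
      have hfsW : f s ∈ W := hfW s hs.1 hs.2
      have hadj : G'.Adj ⟨s, hsW⟩ ⟨f s, hfsW⟩ := hf1 s hs.1
      by_cases h : s ∈ Subtype.val '' C
      · simpa only [hg, if_pos h] using h
      · rcases hC hadj with hcc | hcc
        · exact absurd ⟨_, hcc, rfl⟩ h
        · simp only [hg, if_neg h]
          exact ⟨_, hcc, rfl⟩
    have hginj : Set.InjOn g (S \ U) := by
      intro s hs t ht hst
      by_cases h1 : s ∈ Subtype.val '' C <;> by_cases h2 : t ∈ Subtype.val '' C
      · rw [hg] at hst; simp only [if_pos h1, if_pos h2] at hst; exact hst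
      · rw [hg] at hst; simp only [if_pos h1, if_neg h2] at hst
        exact absurd (hst ▸ hs.1) (hfnS t ht.1)
      · rw [hg] at hst; simp only [if_neg h1, if_pos h2] at hst
        exact absurd (hst ▸ ht.1) (hfnS s hs.1)
      · rw [hg] at hst; simp only [if_neg h1, if_neg h2] at hst
        have := hf1 t ht.1
        rw [← hst] at this
        exact (hf2 s hs.1 t ht.1 this).symm
    calc S'.ncard = (S \ U).ncard := by
          rw [← Set.ncard_image_of_injective S' Subtype.val_injective, hvalS']
      _ = (g '' (S \ U)).ncard := (Set.ncard_image_of_injOn hginj).symm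
      _ ≤ (Subtype.val '' C).ncard :=
          Set.ncard_le_ncard (Set.image_subset_iff.2 hgmem) (Set.toFinite _)
      _ = C.ncard := Set.ncard_image_of_injective C Subtype.val_injective
  have hβ' : coverNumber G' = S'.ncard := coverNumber_eq_of G' S' hS'cover hmin
  have hm' : numMaxIndep G' = 2 ^ S'.ncard :=
    numMaxIndep_eq_two_pow G' S' hS'cover hS'indep hS'priv
  exact ⟨by rw [hm', hβ'], by rw [hβ', hS'card, hcard]⟩
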